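/- Suppose α, β, γ, δ ∈ (0, π) satisfy α < β+γ+δ < α+2π, β < γ+δ+α < β+2π, γ < δ+α+β < γ+2π, and δ < α+β+γ < δ+2π. Then the open intervals (|α−β|, min(α+β, 2π−α−β)) ∩ (|γ−δ|, min(γ+δ, 2π−γ−δ)) and (|β−γ|, min(β+γ, 2π−β−γ)) ∩ (|δ−α|, min(δ+α, 2π−δ−α)) are both nonempty. -/
import Mathlib

lemma aux13 (a b c d : ℝ) (h1 : a < b) (h2 : a < d) (h3 : c < b) (h4 : c < d) :
    (Set.Ioo a b ∩ Set.Ioo c d).Nonempty := by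
  rw [Set.Ioo_inter_Ioo]
  exact Set.nonempty_Ioo.2 (by simp [max_lt_iff, lt_min_iff, h1, h2, h3, h4])

theorem stmt_13 (α β γ δ : ℝ)
    (hα : α ∈ Set.Ioo 0 Real.pi) (hβ : β ∈ Set.Ioo 0 Real.pi)
    (hγ : γ ∈ Set.Ioo 0 Real.pi) (hδ : δ ∈ Set.Ioo 0 Real.pi)
    (h1 : α < β + γ + δ) (h1' : β + γ + δ < α + 2 * Real.pi)
    (h2 : β < γ + δ + α) (h2' : γ + δ + α < β + 2 * Real.pi)
    (h3 : γ < δ + α + β) (h3' : δ + α + β < γ + 2 * Real.pi)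
    (h4 : δ < α + β + γ) (h4' : α + β + γ < δ + 2 * Real.pi) :
    (Set.Ioo (|α - β|) (min (α + β) (2 * Real.pi - α - β)) ∩
      Set.Ioo (|γ - δ|) (min (γ + δ) (2 * Real.pi - γ - δ))).Nonempty ∧
    (Set.Ioo (|β - γ|) (min (β + γ) (2 * Real.pi - β - γ)) ∩
      Set.Ioo (|δ - α|) (min (δ + α) (2 * Real.pi - δ - α))).Nonempty := by
  obtain ⟨ha1, ha2⟩ := hα
  obtain ⟨hb1, hb2⟩ := hβ
  obtain ⟨hc1, hc2⟩ := hγ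
  obtain ⟨hd1, hd2⟩ := hδ
  constructor <;>
  · apply aux13 <;> simp only [lt_min_iff, abs_lt] <;> and_intros <;> linarith
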